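/- Let H be a graph containing a pair of parallel edges, and let 𝔠 be a partition of E(H) into matchings such that the union of any two matchings in 𝔠 is a connected edge set. Then for every transversal T of 𝔠 there exists a family of connected, pairwise disjoint, pairwise incident edge sets traversed by T. -/
import Mathlib


/-- A multigraph (possibly with parallel edges, but loopless): each edge `e` has a
pair of distinct endpoints `ends e`. -/
structure Multigraph (V E : Type*) where
  ends : E → Sym2 V
  not_isDiag : ∀ e, ¬ (ends e).IsDiag

namespace Multigraph

variable {V E : Type*} (G : Multigraph V E)

/-- A matching: a set of pairwise non-incident edges. -/
def Matching (M : Set E) : Prop :=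
  ∀ e ∈ M, ∀ f ∈ M, e ≠ f → ¬ ∃ v : V, v ∈ G.ends e ∧ v ∈ G.ends f

/-- An edge set `F` is connected if it is nonempty and any two of its edges are
linked by a chain of edges of `F`, consecutive ones sharing an endpoint. -/
def EdgesConnected (F : Set E) : Prop :=
  F.Nonempty ∧ ∀ e ∈ F, ∀ f ∈ F,
    Relation.ReflTransGen
      (fun a b => a ∈ F ∧ b ∈ F ∧ ∃ v : V, v ∈ G.ends a ∧ v ∈ G.ends b) e f

/-- Two edge sets are incident if some edge of one shares an endpoint with some
edge of the other. -/
def EdgesIncident (F F' : Set E) : Prop :=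
  ∃ e ∈ F, ∃ f ∈ F', ∃ v : V, v ∈ G.ends e ∧ v ∈ G.ends f

end Multigraph

/-- `𝔠` is a partition of a set into nonempty, pairwise disjoint classes covering
everything. -/
def IsEdgePartition {E : Type*} (𝔠 : Set (Set E)) : Prop :=
  (∀ M ∈ 𝔠, M.Nonempty) ∧ (⋃₀ 𝔠 = Set.univ) ∧
  (∀ M ∈ 𝔠, ∀ N ∈ 𝔠, M ≠ N → Disjoint M N)

/-- The family `𝔎` of pairwise disjoint sets is traversed by `T`. -/
def TraversedBy {α : Type*} (𝔎 : Set (Set α)) (T : Set α) : Prop :=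
  (∀ A ∈ 𝔎, ∃! e, e ∈ T ∧ e ∈ A) ∧ ∀ e ∈ T, ∃ A ∈ 𝔎, e ∈ A

/-- If a graph `H` with a pair of parallel edges has its edge set partitioned into
matchings any two of which have connected union, then for every transversal `T`
of the partition there is a family of connected, pairwise disjoint, pairwise
incident edge sets traversed by `T`. -/
private lemma boundary {α : Type*} {r : α → α → Prop} {S : Set α} :
    ∀ {x y : α}, Relation.ReflTransGen r x y → x ∈ S → y ∉ S →
    ∃ a b, r a b ∧ a ∈ S ∧ b ∉ S := by
  intro x y h
  induction h with
  | refl => intro hx hy; exact absurd hx hy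
  | @tail b c hab hbc ih =>
    intro hx hy
    by_cases hb : b ∈ S
    · exact ⟨b, c, hbc, hb, hy⟩
    · exact ih hx hb

private lemma sym2_eq_of_mem {V : Type*} {x y : V} {s : Sym2 V} (hxy : x ≠ y)
    (hx : x ∈ s) (hy : y ∈ s) : s = s(x, y) := by
  induction s using Sym2.ind with
  | _ a b =>
    rw [Sym2.mem_iff] at hx hy
    rw [Sym2.eq_iff]
    rcases hx with rfl | rfl <;> rcases hy with rfl | rfl <;> tauto

section Key
variable {V E : Type*} {G : Multigraph V E} {𝔠 : Set (Set E)}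

/-- Key lemma B: a "bad pair" forces partner edges in both classes, adjacent to
each other. -/
private lemma keyB
    (hmatch : ∀ M ∈ 𝔠, G.Matching M)
    (hconn : ∀ M ∈ 𝔠, ∀ N ∈ 𝔠, M ≠ N → G.EdgesConnected (M ∪ N))
    {u v : V} (htouch : ∀ g : E, u ∈ G.ends g ∨ v ∈ G.ends g)
    {N N' : Set E} (hN : N ∈ 𝔠) (hN' : N' ∈ 𝔠) (hNN : N ≠ N')
    {t t' : E} (ht : t ∈ N) (ht' : t' ∈ N')
    (hu : u ∈ G.ends t) (hv : v ∈ G.ends t')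
    (hbad : ¬ ∃ w, w ∈ G.ends t ∧ w ∈ G.ends t') :
    ∃ p p', p ∈ N ∧ p ≠ t ∧ u ∉ G.ends p ∧ v ∈ G.ends p ∧
      p' ∈ N' ∧ p' ≠ t' ∧ u ∈ G.ends p' ∧ v ∉ G.ends p' ∧
      (∃ w, w ∈ G.ends p ∧ w ∈ G.ends p') := by
  have hut' : u ∉ G.ends t' := fun h => hbad ⟨u, hu, h⟩
  obtain ⟨a, b, hr, haS, hbS⟩ :=
    boundary (S := {x : E | u ∈ G.ends x})
      ((hconn N hN N' hN' hNN).2 t (Or.inl ht) t' (Or.inr ht')) hu hut'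
  obtain ⟨haF, hbF, w, hwa, hwb⟩ := hr
  have hab : a ≠ b := fun h => hbS (h ▸ haS)
  have hvb : v ∈ G.ends b := (htouch b).resolve_left hbS
  -- a cannot be in N
  have haN' : a ∈ N' := by
    rcases haF with haN | haN'
    · -- then a = t
      have hat : a = t := by
        by_contra hat
        exact hmatch N hN a haN t ht hat ⟨u, haS, hu⟩
      rcases hbF with hbN | hbN'
      · exact absurd ⟨w, hat ▸ hwa, hwb⟩ (hmatch N hN a haN b hbN hab)
      · have hbt' : b = t' := by
          by_contra hbt'
          exact hmatch N' hN' b hbN' t' ht' hbt' ⟨v, hvb, hv⟩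
        exact absurd ⟨w, hat ▸ hwa, hbt' ▸ hwb⟩ hbad
    · exact haN'
  have hbN : b ∈ N := by
    rcases hbF with hbN | hbN'
    · exact hbN
    · exact absurd ⟨w, hwa, hwb⟩ (hmatch N' hN' a haN' b hbN' hab)
  have hat' : a ≠ t' := fun h => hut' (h ▸ haS)
  have hbt : b ≠ t := fun h => hbS (h ▸ hu)
  have hva : v ∉ G.ends a := fun h =>
    hmatch N' hN' a haN' t' ht' hat' ⟨v, h, hv⟩
  exact ⟨b, a, hbN, hbt, hbS, hvb, haN', hat', haS, hva, ⟨w, hwb, hwa⟩⟩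

/-- Key lemma U: an edge cannot form bad pairs with two edges of two further
distinct classes. -/
private lemma keyU
    (hmatch : ∀ M ∈ 𝔠, G.Matching M)
    (hconn : ∀ M ∈ 𝔠, ∀ N ∈ 𝔠, M ≠ N → G.EdgesConnected (M ∪ N))
    {u v : V} (htouch : ∀ g : E, u ∈ G.ends g ∨ v ∈ G.ends g)
    {N N₁ N₂ : Set E} (hN : N ∈ 𝔠) (hN₁ : N₁ ∈ 𝔠) (hN₂ : N₂ ∈ 𝔠)
    (hNN₁ : N ≠ N₁) (hNN₂ : N ≠ N₂) (hN₁₂ : N₁ ≠ N₂)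
    {t t₁ t₂ : E} (ht : t ∈ N) (ht₁ : t₁ ∈ N₁) (ht₂ : t₂ ∈ N₂)
    (hu : u ∈ G.ends t)
    (hbad₁ : ¬ ∃ w, w ∈ G.ends t ∧ w ∈ G.ends t₁)
    (hbad₂ : ¬ ∃ w, w ∈ G.ends t ∧ w ∈ G.ends t₂) : False := by
  have hv₁ : v ∈ G.ends t₁ := (htouch t₁).resolve_left fun h => hbad₁ ⟨u, hu, h⟩
  have hv₂ : v ∈ G.ends t₂ := (htouch t₂).resolve_left fun h => hbad₂ ⟨u, hu, h⟩
  obtain ⟨p₁, q₁, hp₁N, hp₁t, hup₁, hvp₁, hq₁N, hq₁t, huq₁, hvq₁, z₁, hz₁p, hz₁q⟩ :=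
    keyB hmatch hconn htouch hN hN₁ hNN₁ ht ht₁ hu hv₁ hbad₁
  obtain ⟨p₂, q₂, hp₂N, hp₂t, hup₂, hvp₂, hq₂N, hq₂t, huq₂, hvq₂, z₂, hz₂p, hz₂q⟩ :=
    keyB hmatch hconn htouch hN hN₂ hNN₂ ht ht₂ hu hv₂ hbad₂
  -- p₁ = p₂
  have hpp : p₁ = p₂ := by
    by_contra hne
    exact hmatch N hN p₁ hp₁N p₂ hp₂N hne ⟨v, hvp₁, hvp₂⟩
  subst hpp
  -- the shared vertices coincide
  have hz₁v : z₁ ≠ v := fun h => hvq₁ (h ▸ hz₁q)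
  have hz₂v : z₂ ≠ v := fun h => hvq₂ (h ▸ hz₂q)
  obtain ⟨c, hc⟩ := Sym2.mem_iff_exists.mp hvp₁
  have hz₁c : z₁ = c := by
    have := hc ▸ hz₁p; rw [Sym2.mem_iff] at this; tauto
  have hz₂c : z₂ = c := by
    have := hc ▸ hz₂p; rw [Sym2.mem_iff] at this; tauto
  have hz12 : z₁ = z₂ := hz₁c.trans hz₂c.symm
  have hz₁u : z₁ ≠ u := fun h => hup₁ (h ▸ hz₁p)
  have hz₂u : z₂ ≠ u := fun h => hup₁ (h ▸ hz₂p)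
  -- boundary argument in N₁ ∪ N₂, from q₁ to t₂
  have hut₂ : u ∉ G.ends t₂ := fun h => hbad₂ ⟨u, hu, h⟩
  have hut₁ : u ∉ G.ends t₁ := fun h => hbad₁ ⟨u, hu, h⟩
  obtain ⟨a, b, hr, haS, hbS⟩ :=
    boundary (S := {x : E | u ∈ G.ends x})
      ((hconn N₁ hN₁ N₂ hN₂ hN₁₂).2 q₁ (Or.inl hq₁N) t₂ (Or.inr ht₂)) huq₁ hut₂
  obtain ⟨haF, hbF, w, hwa, hwb⟩ := hr
  have hab : a ≠ b := fun h => hbS (h ▸ haS)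
  have hvb : v ∈ G.ends b := (htouch b).resolve_left hbS
  have hwu : w ≠ u := fun h => hbS (h ▸ hwb)
  rcases haF with haN₁ | haN₂
  · rcases hbF with hbN₁ | hbN₂
    · exact hmatch N₁ hN₁ a haN₁ b hbN₁ hab ⟨w, hwa, hwb⟩
    · -- a = q₁, b = t₂
      have hat₁ : a ≠ t₁ := fun h => hut₁ (h ▸ haS)
      have haq₁ : a = q₁ := by
        by_contra hne
        exact hmatch N₁ hN₁ a haN₁ q₁ hq₁N hne ⟨u, haS, huq₁⟩
      have hbt₂ : b = t₂ := by
        by_contra hne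
        exact hmatch N₂ hN₂ b hbN₂ t₂ ht₂ hne ⟨v, hvb, hv₂⟩
      have hq₁ends : G.ends q₁ = s(u, z₁) := sym2_eq_of_mem hz₁u.symm huq₁ hz₁q
      have hwz : w = z₁ := by
        have := haq₁ ▸ hwa
        rw [hq₁ends, Sym2.mem_iff] at this
        tauto
      have : z₂ ∈ G.ends t₂ := hz12 ▸ hwz ▸ hbt₂ ▸ hwb
      exact hmatch N₂ hN₂ q₂ hq₂N t₂ ht₂ hq₂t ⟨z₂, hz₂q, this⟩
  · rcases hbF with hbN₁ | hbN₂
    · -- a = q₂, b = t₁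
      have haq₂ : a = q₂ := by
        by_contra hne
        exact hmatch N₂ hN₂ a haN₂ q₂ hq₂N hne ⟨u, haS, huq₂⟩
      have hbt₁ : b = t₁ := by
        by_contra hne
        exact hmatch N₁ hN₁ b hbN₁ t₁ ht₁ hne ⟨v, hvb, hv₁⟩
      have hq₂ends : G.ends q₂ = s(u, z₂) := sym2_eq_of_mem hz₂u.symm huq₂ hz₂q
      have hwz : w = z₂ := by
        have := haq₂ ▸ hwa
        rw [hq₂ends, Sym2.mem_iff] at this
        tauto
      have : z₁ ∈ G.ends t₁ := hz12.symm ▸ hwz ▸ hbt₁ ▸ hwb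
      exact hmatch N₁ hN₁ q₁ hq₁N t₁ ht₁ hq₁t ⟨z₁, hz₁q, this⟩
    · exact hmatch N₂ hN₂ a haN₂ b hbN₂ hab ⟨w, hwa, hwb⟩

end Key

theorem parallel_edges_case {V E : Type*} [Fintype V] [Fintype E]
    (G : Multigraph V E) (𝔠 : Set (Set E)) (hpart : IsEdgePartition 𝔠)
    (hmatch : ∀ M ∈ 𝔠, G.Matching M)
    (hconn : ∀ M ∈ 𝔠, ∀ N ∈ 𝔠, M ≠ N → G.EdgesConnected (M ∪ N))
    (e f : E) (hef : e ≠ f) (hpar : G.ends e = G.ends f)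
    (T : Set E) (hT : T ⊆ ⋃₀ 𝔠) (hT1 : ∀ M ∈ 𝔠, ∃! e, e ∈ T ∧ e ∈ M) :
    ∃ 𝔎 : Set (Set E),
      (∀ A ∈ 𝔎, G.EdgesConnected A) ∧
      (∀ A ∈ 𝔎, ∀ B ∈ 𝔎, A ≠ B → Disjoint A B) ∧
      (∀ A ∈ 𝔎, ∀ B ∈ 𝔎, A ≠ B → G.EdgesIncident A B) ∧
      TraversedBy 𝔎 T := by
  classical
  obtain ⟨u, v, hends, huv⟩ : ∃ u v, G.ends e = s(u, v) ∧ u ≠ v := by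
    obtain ⟨v, hv⟩ := Sym2.mem_iff_exists.mp (Sym2.out_fst_mem (G.ends e))
    refine ⟨_, v, hv, fun h => ?_⟩
    exact G.not_isDiag e (by rw [hv, Sym2.mk_isDiag_iff]; exact h)
  have hue : u ∈ G.ends e := by rw [hends]; exact Sym2.mem_iff.mpr (Or.inl rfl)
  have hve : v ∈ G.ends e := by rw [hends]; exact Sym2.mem_iff.mpr (Or.inr rfl)
  have huf : u ∈ G.ends f := hpar ▸ hue
  have hvf : v ∈ G.ends f := hpar ▸ hve
  -- classes
  have hcover : ∀ g : E, ∃ N, N ∈ 𝔠 ∧ g ∈ N := by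
    intro g
    have : g ∈ ⋃₀ 𝔠 := by rw [hpart.2.1]; trivial
    simpa [Set.mem_sUnion] using this
  choose cl hcl hgcl using hcover
  have hclU : ∀ {g : E} {N : Set E}, N ∈ 𝔠 → g ∈ N → N = cl g := by
    intro g N hN hg
    by_contra hne
    exact Set.disjoint_left.mp (hpart.2.2 N hN (cl g) (hcl g) hne) hg (hgcl g)
  have hclef : cl e ≠ cl f := by
    intro h
    have hf : f ∈ cl e := h ▸ hgcl f
    exact hmatch (cl e) (hcl e) e (hgcl e) f hf hef ⟨u, hue, huf⟩
  -- the class of e is {e}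
  have hclE : ∀ g ∈ cl e, g = e := by
    intro g hg
    by_contra hge
    have hgf : g ≠ f := fun hgfe => hclef (hclU (hcl e) (hgfe ▸ hg))
    obtain ⟨a, b, hr, haS, hbS⟩ :=
      boundary (S := {x : E | x ≠ e ∧ x ≠ f})
        ((hconn (cl e) (hcl e) (cl f) (hcl f) hclef).2 g (Or.inl hg) e
          (Or.inl (hgcl e))) ⟨hge, hgf⟩ (fun h => h.1 rfl)
    obtain ⟨haF, hbF, w, hwa, hwb⟩ := hr
    have hwef : w ∈ G.ends e ∧ w ∈ G.ends f := by
      rcases not_and_or.mp hbS with hb | hb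
      · rw [not_ne_iff] at hb; subst hb; exact ⟨hwb, hpar ▸ hwb⟩
      · rw [not_ne_iff] at hb; subst hb; exact ⟨hpar.symm ▸ hwb, hwb⟩
    rcases haF with haN | haN
    · exact haS.1 (by
        by_contra hne
        exact hmatch (cl e) (hcl e) a haN e (hgcl e) hne ⟨w, hwa, hwef.1⟩)
    · exact haS.2 (by
        by_contra hne
        exact hmatch (cl f) (hcl f) a haN f (hgcl f) hne ⟨w, hwa, hwef.2⟩)
  -- every edge touches u or v
  have htouch : ∀ g : E, u ∈ G.ends g ∨ v ∈ G.ends g := by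
    intro g
    by_cases hge : cl g = cl e
    · have : g = e := hclE g (hge ▸ hgcl g)
      subst this; exact Or.inl hue
    · have hF := hconn (cl g) (hcl g) (cl e) (hcl e) hge
      have hpath := hF.2 e (Or.inr (hgcl e)) g (Or.inl (hgcl g))
      suffices h : ∀ x, Relation.ReflTransGen
          (fun a b => a ∈ cl g ∪ cl e ∧ b ∈ cl g ∪ cl e ∧
            ∃ w, w ∈ G.ends a ∧ w ∈ G.ends b) e x →
          (u ∈ G.ends x ∨ v ∈ G.ends x) from h g hpath
      intro x hx
      induction hx with
      | refl => exact Or.inl hue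
      | @tail b c hab hbc ih =>
        obtain ⟨hbF, hcF, w, hwb, hwc⟩ := hbc
        by_cases hbc' : b = c
        · exact hbc' ▸ ih
        · rcases hbF with hbN | hbN
          · rcases hcF with hcN | hcN
            · exact absurd ⟨w, hwb, hwc⟩
                (hmatch (cl g) (hcl g) b hbN c hcN hbc')
            · have : c = e := hclE c hcN
              subst this; exact Or.inl hue
          · have : b = e := hclE b hbN
            subst this
            have : w = u ∨ w = v := by
              have := hends ▸ hwb; rwa [Sym2.mem_iff] at this
            rcases this with rfl | rfl
            · exact Or.inl hwc
            · exact Or.inr hwc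
  have hshare_self : ∀ g : E, ∃ w, w ∈ G.ends g ∧ w ∈ G.ends g := by
    intro g; rcases htouch g with h | h
    exacts [⟨u, h, h⟩, ⟨v, h, h⟩]
  have hTdistinct : ∀ {a b : E}, a ∈ T → b ∈ T → a ∈ cl b → a = b := by
    intro a b ha hb hab
    obtain ⟨x, -, hxU⟩ := hT1 (cl b) (hcl b)
    exact (hxU a ⟨ha, hab⟩).trans (hxU b ⟨hb, hgcl b⟩).symm
  have hclTne : ∀ {a b : E}, a ∈ T → b ∈ T → a ≠ b → cl a ≠ cl b := by
    intro a b ha hb hne h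
    exact hne (hTdistinct ha hb (h ▸ hgcl a))
  -- packaged keyB
  have hKB : ∀ t ∈ T, ∀ t' ∈ T, (¬ ∃ w, w ∈ G.ends t ∧ w ∈ G.ends t') →
      ∃ p p', p ∈ cl t ∧ p ≠ t ∧ p' ∈ cl t' ∧ p' ≠ t' ∧
        (∃ w, w ∈ G.ends t ∧ w ∈ G.ends p') ∧
        (∃ w, w ∈ G.ends t' ∧ w ∈ G.ends p) ∧
        (∃ w, w ∈ G.ends p ∧ w ∈ G.ends p') := by
    intro t ht t' ht' hbad
    have htt' : t ≠ t' := by rintro rfl; exact hbad (hshare_self t)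
    have hclne : cl t ≠ cl t' := hclTne ht ht' htt'
    rcases htouch t with hut | hvt
    · have hvt' : v ∈ G.ends t' :=
        (htouch t').resolve_left (fun h => hbad ⟨u, hut, h⟩)
      obtain ⟨p, p', hpN, hpt, hup, hvp, hp'N, hp't, hup', hvp', hw⟩ :=
        keyB hmatch hconn htouch (hcl t) (hcl t') hclne (hgcl t) (hgcl t')
          hut hvt' hbad
      exact ⟨p, p', hpN, hpt, hp'N, hp't, ⟨u, hut, hup'⟩, ⟨v, hvt', hvp⟩, hw⟩
    · have hut' : u ∈ G.ends t' :=
        (htouch t').resolve_right (fun h => hbad ⟨v, hvt, h⟩)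
      obtain ⟨p, p', hpN, hpt, hup, hvp, hp'N, hp't, hup', hvp', hw⟩ :=
        keyB (u := v) (v := u) hmatch hconn (fun g => (htouch g).symm)
          (hcl t) (hcl t') hclne (hgcl t) (hgcl t') hvt hut' hbad
      exact ⟨p, p', hpN, hpt, hp'N, hp't, ⟨v, hvt, hup'⟩, ⟨u, hut', hvp⟩, hw⟩
  -- packaged uniqueness of bad partners
  have hKU : ∀ t ∈ T, ∀ a ∈ T, ∀ b ∈ T,
      (¬ ∃ w, w ∈ G.ends t ∧ w ∈ G.ends a) →
      (¬ ∃ w, w ∈ G.ends t ∧ w ∈ G.ends b) → a = b := by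
    intro t ht a ha b hb h1 h2
    by_contra hab
    have hta : t ≠ a := by rintro rfl; exact h1 (hshare_self t)
    have htb : t ≠ b := by rintro rfl; exact h2 (hshare_self t)
    rcases htouch t with hut | hvt
    · exact keyU hmatch hconn htouch (hcl t) (hcl a) (hcl b)
        (hclTne ht ha hta) (hclTne ht hb htb) (hclTne ha hb hab)
        (hgcl t) (hgcl a) (hgcl b) hut h1 h2
    · exact keyU (u := v) (v := u) hmatch hconn (fun g => (htouch g).symm)
        (hcl t) (hcl a) (hcl b)
        (hclTne ht ha hta) (hclTne ht hb htb) (hclTne ha hb hab)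
        (hgcl t) (hgcl a) (hgcl b) hvt h1 h2
  -- partner function
  have hptEx : ∀ t : E, ∃ t',
      ((∃ s, s ∈ T ∧ ¬ ∃ w, w ∈ G.ends t ∧ w ∈ G.ends s) →
        (t' ∈ T ∧ ¬ ∃ w, w ∈ G.ends t ∧ w ∈ G.ends t')) := by
    intro t
    by_cases h : ∃ s, s ∈ T ∧ ¬ ∃ w, w ∈ G.ends t ∧ w ∈ G.ends s
    · exact ⟨h.choose, fun _ => h.choose_spec⟩
    · exact ⟨t, fun hh => absurd hh h⟩
  choose pt hpt using hptEx
  -- fill function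
  have hfillEx : ∀ t : E, ∃ q,
      ((t ∈ T ∧ ∃ s, s ∈ T ∧ ¬ ∃ w, w ∈ G.ends t ∧ w ∈ G.ends s) →
        (q ∈ cl (pt t) ∧ q ≠ pt t ∧ (∃ w, w ∈ G.ends t ∧ w ∈ G.ends q))) := by
    intro t
    by_cases h : t ∈ T ∧ ∃ s, s ∈ T ∧ ¬ ∃ w, w ∈ G.ends t ∧ w ∈ G.ends s
    · have h1 := hpt t h.2
      obtain ⟨p, p', hp, hptne, hp', hp't, hsh1, -, -⟩ :=
        hKB t h.1 (pt t) h1.1 h1.2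
      exact ⟨p', fun _ => ⟨hp', hp't, hsh1⟩⟩
    · exact ⟨t, fun hh => absurd hh h⟩
  choose fl hfl using hfillEx
  have hflT : ∀ t : E,
      (t ∈ T ∧ ∃ s, s ∈ T ∧ ¬ ∃ w, w ∈ G.ends t ∧ w ∈ G.ends s) →
      fl t ∉ T := by
    intro t h hmem
    have h1 := hpt t h.2
    have h2 := hfl t h
    exact h2.2.1 (hTdistinct hmem h1.1 h2.1)
  have hpair : ∀ t ∈ T, ∀ t' ∈ T,
      (¬ ∃ w, w ∈ G.ends t ∧ w ∈ G.ends t') → pt t = t' := by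
    intro t ht t' ht' hbad
    have h := hpt t ⟨t', ht', hbad⟩
    exact hKU t ht (pt t) h.1 t' ht' h.2 hbad
  -- each class has at most one edge besides a given one
  have hcsing : ∀ t : E, ∀ a ∈ cl t, ∀ b ∈ cl t, a ≠ t → b ≠ t → a = b := by
    intro t a ha b hb hat hbt
    by_contra hab
    rcases htouch t with ht' | ht'
    · have hva : v ∈ G.ends a := (htouch a).resolve_left
        (fun h => hmatch _ (hcl t) a ha t (hgcl t) hat ⟨u, h, ht'⟩)
      have hvb : v ∈ G.ends b := (htouch b).resolve_left
        (fun h => hmatch _ (hcl t) b hb t (hgcl t) hbt ⟨u, h, ht'⟩)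
      exact hmatch _ (hcl t) a ha b hb hab ⟨v, hva, hvb⟩
    · have hva : u ∈ G.ends a := (htouch a).resolve_right
        (fun h => hmatch _ (hcl t) a ha t (hgcl t) hat ⟨v, h, ht'⟩)
      have hvb : u ∈ G.ends b := (htouch b).resolve_right
        (fun h => hmatch _ (hcl t) b hb t (hgcl t) hbt ⟨v, h, ht'⟩)
      exact hmatch _ (hcl t) a ha b hb hab ⟨u, hva, hvb⟩
  -- fills of a bad pair are incident
  have hcross : ∀ t ∈ T, ∀ t' ∈ T, (¬ ∃ w, w ∈ G.ends t ∧ w ∈ G.ends t') →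
      ∃ w, w ∈ G.ends (fl t) ∧ w ∈ G.ends (fl t') := by
    intro t ht t' ht' hbad
    have hbad' : ¬ ∃ w, w ∈ G.ends t' ∧ w ∈ G.ends t := by
      rintro ⟨w, h1, h2⟩; exact hbad ⟨w, h2, h1⟩
    have hp1 : pt t = t' := hpair t ht t' ht' hbad
    have hp2 : pt t' = t := hpair t' ht' t ht hbad'
    have hf1 := hfl t ⟨ht, t', ht', hbad⟩
    have hf2 := hfl t' ⟨ht', t, ht, hbad'⟩
    obtain ⟨p, p', hp, hptne, hp', hp'ne, -, -, w, hw1, hw2⟩ :=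
      hKB t ht t' ht' hbad
    have e1 : fl t = p' :=
      hcsing t' (fl t) (hp1 ▸ hf1.1) p' hp' (hp1 ▸ hf1.2.1) hp'ne
    have e2 : fl t' = p :=
      hcsing t (fl t') (hp2 ▸ hf2.1) p hp (hp2 ▸ hf2.2.1) hptne
    exact ⟨w, by rw [e1]; exact hw2, by rw [e2]; exact hw1⟩
  -- the family
  set A : E → Set E := fun t => insert t
    {x | x = fl t ∧ ∃ s, s ∈ T ∧ ¬ ∃ w, w ∈ G.ends t ∧ w ∈ G.ends s} with hA
  have hmemA : ∀ t x, x ∈ A t ↔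
      (x = t ∨ (x = fl t ∧ ∃ s, s ∈ T ∧ ¬ ∃ w, w ∈ G.ends t ∧ w ∈ G.ends s)) := by
    intro t x; simp [hA]
  have htA : ∀ t, t ∈ A t := fun t => (hmemA t t).mpr (Or.inl rfl)
  refine ⟨A '' T, ?_, ?_, ?_, ?_, ?_⟩
  · -- connected
    rintro A' ⟨t, ht, rfl⟩
    refine ⟨⟨t, htA t⟩, ?_⟩
    intro a ha b hb
    rcases (hmemA t a).1 ha with h1 | ⟨h1, hb1⟩ <;>
      rcases (hmemA t b).1 hb with h2 | ⟨h2, hb2⟩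
    · rw [h1, h2]
    · rw [h1, h2]
      exact Relation.ReflTransGen.single
        ⟨htA t, (hmemA t _).2 (Or.inr ⟨rfl, hb2⟩), (hfl t ⟨ht, hb2⟩).2.2⟩
    · rw [h1, h2]
      obtain ⟨w, hw1, hw2⟩ := (hfl t ⟨ht, hb1⟩).2.2
      exact Relation.ReflTransGen.single
        ⟨(hmemA t _).2 (Or.inr ⟨rfl, hb1⟩), htA t, ⟨w, hw2, hw1⟩⟩
    · rw [h1, h2]
  · -- disjoint
    rintro A1 ⟨t, ht, rfl⟩ A2 ⟨t', ht', rfl⟩ hne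
    have htt' : t ≠ t' := by rintro rfl; exact hne rfl
    rw [Set.disjoint_left]
    intro x hx hx'
    rcases (hmemA t x).1 hx with h1 | ⟨h1, hBdt⟩ <;>
      rcases (hmemA t' x).1 hx' with h2 | ⟨h2, hBdt'⟩
    · exact htt' (h1.symm.trans h2)
    · exact hflT t' ⟨ht', hBdt'⟩ ((h1.symm.trans h2) ▸ ht)
    · exact hflT t ⟨ht, hBdt⟩ ((h2.symm.trans h1) ▸ ht')
    · have h12 : fl t = fl t' := h1.symm.trans h2
      have hs := hpt t hBdt
      have hs' := hpt t' hBdt'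
      by_cases hq : pt t = pt t'
      · refine htt' (hKU (pt t) hs.1 t ht t' ht' ?_ ?_)
        · rintro ⟨w, hw1, hw2⟩; exact hs.2 ⟨w, hw2, hw1⟩
        · rw [hq]; rintro ⟨w, hw1, hw2⟩; exact hs'.2 ⟨w, hw2, hw1⟩
      · have hcld : cl (pt t) ≠ cl (pt t') := hclTne hs.1 hs'.1 hq
        exact Set.disjoint_left.mp
          (hpart.2.2 _ (hcl (pt t)) _ (hcl (pt t')) hcld)
          (hfl t ⟨ht, hBdt⟩).1 (h12.symm ▸ (hfl t' ⟨ht', hBdt'⟩).1)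
  · -- incident
    rintro A1 ⟨t, ht, rfl⟩ A2 ⟨t', ht', rfl⟩ hne
    have htt' : t ≠ t' := by rintro rfl; exact hne rfl
    by_cases hsh : ∃ w, w ∈ G.ends t ∧ w ∈ G.ends t'
    · exact ⟨t, htA t, t', htA t', hsh⟩
    · have hsh' : ¬ ∃ w, w ∈ G.ends t' ∧ w ∈ G.ends t := by
        rintro ⟨w, h1, h2⟩; exact hsh ⟨w, h2, h1⟩
      exact ⟨fl t, (hmemA t _).2 (Or.inr ⟨rfl, t', ht', hsh⟩),
        fl t', (hmemA t' _).2 (Or.inr ⟨rfl, t, ht, hsh'⟩),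
        hcross t ht t' ht' hsh⟩
  · -- traversed: uniqueness
    rintro A' ⟨t, ht, rfl⟩
    refine ⟨t, ⟨ht, htA t⟩, ?_⟩
    rintro y ⟨hyT, hyA⟩
    rcases (hmemA t y).1 hyA with rfl | ⟨rfl, hBd⟩
    · rfl
    · exact absurd hyT (hflT t ⟨ht, hBd⟩)
  · -- traversed: covering
    intro x hx
    exact ⟨A x, ⟨x, hx, rfl⟩, htA x⟩
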